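/- If z ∼ N(ξ, σ²) (scalar) and t ≥ 0, then E[(sgn(z)·max(|z|−t,0) − ξ)²] = σ²(1 − 2P(|z| ≤ t)) + E[min(z², t²)]. (Stein's unbiased risk formula for soft thresholding.) -/

import Mathlib

open MeasureTheory ProbabilityTheory Real Set Filter
open scoped NNReal ENNReal Topology

namespace SureAux

noncomputable def clampF (t z : ℝ) : ℝ := max (-t) (min z t)

lemma abs_clamp_le {t : ℝ} (ht : 0 ≤ t) (z : ℝ) : |clampF t z| ≤ t := by
  rw [abs_le]
  exact ⟨le_max_left _ _, max_le (by linarith) (min_le_right _ _)⟩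

lemma sq_clamp {t : ℝ} (ht : 0 ≤ t) (z : ℝ) :
    clampF t z ^ 2 = min (z ^ 2) (t ^ 2) := by
  unfold clampF
  rcases le_total z (-t) with h | h
  · rw [min_eq_left (show z ≤ t by linarith), max_eq_left h,
      min_eq_right (show t^2 ≤ z^2 by nlinarith)]
    ring
  · rcases le_total z t with h2 | h2
    · rw [min_eq_left h2, max_eq_right h, min_eq_left (show z^2 ≤ t^2 by nlinarith)]
    · rw [min_eq_right h2, max_eq_right (show -t ≤ t by linarith),
        min_eq_right (show t^2 ≤ z^2 by nlinarith)]

lemma soft_eq {t : ℝ} (ht : 0 ≤ t) (z : ℝ) :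
    Real.sign z * max (|z| - t) 0 = z - clampF t z := by
  unfold clampF
  rcases lt_trichotomy z 0 with h | h | h
  · rw [Real.sign_of_neg h, abs_of_neg h, min_eq_left (show z ≤ t by linarith)]
    rcases le_total z (-t) with h2 | h2
    · rw [max_eq_left (show (0:ℝ) ≤ -z - t by linarith),
        max_eq_left (show z ≤ -t from h2)]
      ring
    · rw [max_eq_right (show -z - t ≤ (0:ℝ) by linarith),
        max_eq_right (show -t ≤ z from h2)]
      ring
  · subst h
    simp [Real.sign_zero, min_eq_left ht, max_eq_right (neg_nonpos.mpr ht)]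
  · rw [Real.sign_of_pos h, abs_of_pos h,
      max_eq_right (le_min (show -t ≤ z by linarith) (show -t ≤ t by linarith))]
    rcases le_total z t with h2 | h2
    · rw [min_eq_left h2, max_eq_right (show z - t ≤ (0:ℝ) by linarith)]
      ring
    · rw [min_eq_right h2, max_eq_left (show (0:ℝ) ≤ z - t by linarith)]
      ring

section Gauss

variable {v : ℝ≥0} (ξ : ℝ)

lemma Vpos (hv : v ≠ 0) : (0:ℝ) < (v:ℝ) := by
  have : 0 < v := lt_of_le_of_ne zero_le (Ne.symm hv)
  exact_mod_cast this

lemma hasDerivAt_gpdf (hv : v ≠ 0) (x : ℝ) :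
    HasDerivAt (fun y => -(v:ℝ) * gaussianPDFReal ξ v y)
      ((x - ξ) * gaussianPDFReal ξ v x) x := by
  have hV : (0:ℝ) < (v:ℝ) := Vpos hv
  have hne : (v:ℝ) ≠ 0 := ne_of_gt hV
  have h0 : HasDerivAt (fun y : ℝ => y - ξ) 1 x := (hasDerivAt_id x).sub_const ξ
  have h1 : HasDerivAt (fun y : ℝ => -(y - ξ)^2 / (2*(v:ℝ))) (-(x - ξ)/(v:ℝ)) x := by
    have := ((h0.pow 2).neg).div_const (2*(v:ℝ))
    refine this.congr_deriv ?_
    field_simp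
    ring
  have h2 := (h1.exp.const_mul ((√(2 * π * (v:ℝ)))⁻¹)).const_mul (-(v:ℝ))
  have hfun : (fun y => -(v:ℝ) * gaussianPDFReal ξ v y)
      = fun y => -(v:ℝ) * ((√(2 * π * (v:ℝ)))⁻¹ * rexp (-(y - ξ)^2 / (2*(v:ℝ)))) := by
    funext y
    simp only [gaussianPDFReal]
  rw [hfun]
  refine h2.congr_deriv ?_
  simp only [gaussianPDFReal]
  field_simp

/-- key bound `u^2 * exp (-u^2/c) ≤ c` -/
lemma key_bound {c : ℝ} (hc : 0 < c) (u : ℝ) : u^2 * rexp (-u^2/c) ≤ c := by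
  have h1 : u^2/c + 1 ≤ rexp (u^2/c) := Real.add_one_le_exp _
  have h3 : rexp (-u^2/c) * rexp (u^2/c) = 1 := by
    rw [← Real.exp_add, show -u^2/c + u^2/c = 0 by ring, Real.exp_zero]
  have h4 : 0 < rexp (-u^2/c) := Real.exp_pos _
  have h5 : c * (u^2/c) = u^2 := by field_simp
  have h6 : u^2 ≤ c * rexp (u^2/c) := by nlinarith [mul_le_mul_of_nonneg_left h1 hc.le]
  calc u^2 * rexp (-u^2/c) ≤ (c * rexp (u^2/c)) * rexp (-u^2/c) :=
        mul_le_mul_of_nonneg_right h6 h4.le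
    _ = c * (rexp (-u^2/c) * rexp (u^2/c)) := by ring
    _ = c := by rw [h3, mul_one]

lemma tendsto_exp_gauss {c : ℝ} (hc : 0 < c) {l : Filter ℝ}
    (hl : Tendsto (fun x => |x - ξ|) l atTop) :
    Tendsto (fun x => rexp (-(x - ξ)^2 / c)) l (𝓝 0) := by
  have h1 : Tendsto (fun x => (x - ξ)^2) l atTop := by
    refine (hl.atTop_mul_atTop₀ hl).congr fun x => ?_
    rw [abs_mul_abs_self, ← pow_two]
  have h2 : Tendsto (fun x => -(x - ξ)^2 / c) l atBot := by
    have h3 := tendsto_neg_atTop_atBot.comp (h1.atTop_div_const hc)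
    refine h3.congr fun x => ?_
    simp [Function.comp, neg_div]
  exact Real.tendsto_exp_atBot.comp h2

lemma tendsto_gpdf {l : Filter ℝ} (hv : v ≠ 0)
    (hl : Tendsto (fun x => |x - ξ|) l atTop) :
    Tendsto (gaussianPDFReal ξ v) l (𝓝 0) := by
  have hV : (0:ℝ) < (v:ℝ) := Vpos hv
  have h := (tendsto_exp_gauss ξ (by positivity : (0:ℝ) < 2*(v:ℝ)) hl).const_mul
      ((√(2 * π * (v:ℝ)))⁻¹)
  rw [gaussianPDFReal_def]
  simpa using h

lemma pdf_factor (hv : v ≠ 0) (x : ℝ) :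
    gaussianPDFReal ξ v x
      = (√(2 * π * (v:ℝ)))⁻¹ * (rexp (-(x-ξ)^2/(4*(v:ℝ))) * rexp (-(x-ξ)^2/(4*(v:ℝ)))) := by
  have hV : (0:ℝ) < (v:ℝ) := Vpos hv
  have hne : (v:ℝ) ≠ 0 := ne_of_gt hV
  rw [gaussianPDFReal, ← Real.exp_add]
  congr 1
  field_simp
  ring

lemma abs_mul_pdf_le (hv : v ≠ 0) (x : ℝ) :
    |(x - ξ) * gaussianPDFReal ξ v x| ≤
      (√(2 * π * (v:ℝ)))⁻¹ * rexp (-(x - ξ)^2 / (2*(v:ℝ)))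
        + ((√(2 * π * (v:ℝ)))⁻¹ * (4*(v:ℝ))) * rexp (-(x - ξ)^2 / (4*(v:ℝ))) := by
  have hV : (0:ℝ) < (v:ℝ) := Vpos hv
  set c : ℝ := (√(2 * π * (v:ℝ)))⁻¹ with hc
  have hc0 : 0 ≤ c := by positivity
  set E4 : ℝ := rexp (-(x-ξ)^2/(4*(v:ℝ))) with hE4
  have hE40 : 0 ≤ E4 := le_of_lt (Real.exp_pos _)
  have hfac : gaussianPDFReal ξ v x = c * (E4 * E4) := pdf_factor ξ hv x
  have hsplit : rexp (-(x - ξ)^2 / (2*(v:ℝ))) = E4 * E4 := by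
    rw [hE4, ← Real.exp_add]
    congr 1
    have hne : (v:ℝ) ≠ 0 := ne_of_gt hV
    field_simp
    ring
  have habs : |x - ξ| ≤ 1 + (x - ξ)^2 := by
    nlinarith [abs_nonneg (x - ξ), sq_abs (x - ξ), sq_nonneg (|x - ξ| - 1)]
  have hkey : (x - ξ)^2 * E4 ≤ 4*(v:ℝ) := key_bound (by positivity) (x - ξ)
  rw [abs_mul, hfac, abs_of_nonneg (by positivity : (0:ℝ) ≤ c * (E4 * E4)), hsplit]
  have h1 : |x - ξ| * (c * (E4 * E4)) ≤ (1 + (x - ξ)^2) * (c * (E4 * E4)) :=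
    mul_le_mul_of_nonneg_right habs (by positivity)
  have h2 : (x - ξ)^2 * E4 * (c * E4) ≤ (4*(v:ℝ)) * (c * E4) :=
    mul_le_mul_of_nonneg_right hkey (by positivity)
  nlinarith [h1, h2]

lemma integrable_exp_quarter (hv : v ≠ 0) :
    Integrable (fun x => rexp (-(x - ξ)^2 / (4*(v:ℝ)))) := by
  have hV : (0:ℝ) < (v:ℝ) := Vpos hv
  have hb : (0:ℝ) < (4*(v:ℝ))⁻¹ := by positivity
  have h := (integrable_exp_neg_mul_sq hb).comp_sub_right ξ
  refine h.congr ?_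
  filter_upwards with x
  congr 1
  ring

lemma continuous_gpdf : Continuous (gaussianPDFReal ξ v) := by
  unfold gaussianPDFReal
  fun_prop

lemma integrable_sq_mul_pdf (hv : v ≠ 0) :
    Integrable (fun x => (x - ξ)^2 * gaussianPDFReal ξ v x) := by
  have hV : (0:ℝ) < (v:ℝ) := Vpos hv
  set c : ℝ := (√(2 * π * (v:ℝ)))⁻¹ with hc
  have hcont : Continuous (fun x => (x - ξ)^2 * gaussianPDFReal ξ v x) :=
    (((continuous_id.sub continuous_const).pow 2).mul (continuous_gpdf ξ))
  refine Integrable.mono' ((integrable_exp_quarter ξ hv).const_mul (c * (4*(v:ℝ))))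
    hcont.aestronglyMeasurable ?_
  filter_upwards with x
  set E4 : ℝ := rexp (-(x-ξ)^2/(4*(v:ℝ))) with hE4
  have hE40 : 0 ≤ E4 := le_of_lt (Real.exp_pos _)
  have hfac : gaussianPDFReal ξ v x = c * (E4 * E4) := pdf_factor ξ hv x
  have hkey : (x - ξ)^2 * E4 ≤ 4*(v:ℝ) := key_bound (by positivity) (x - ξ)
  have hc0 : (0:ℝ) ≤ c := by positivity
  rw [norm_eq_abs, hfac, abs_of_nonneg (by positivity)]
  have h2 : (x - ξ)^2 * E4 * (c * E4) ≤ (4*(v:ℝ)) * (c * E4) :=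
    mul_le_mul_of_nonneg_right hkey (by positivity)
  nlinarith [h2]

lemma integrable_lin_mul_pdf (hv : v ≠ 0) :
    Integrable (fun x => (x - ξ) * gaussianPDFReal ξ v x) := by
  have hcont : Continuous (fun x => (x - ξ) * gaussianPDFReal ξ v x) :=
    ((continuous_id.sub continuous_const).mul (continuous_gpdf ξ))
  refine Integrable.mono'
    (g := fun x => gaussianPDFReal ξ v x + (x - ξ)^2 * gaussianPDFReal ξ v x)
    ((integrable_gaussianPDFReal ξ v).add (integrable_sq_mul_pdf ξ hv))
    hcont.aestronglyMeasurable ?_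
  filter_upwards with x
  have hp0 : 0 ≤ gaussianPDFReal ξ v x := gaussianPDFReal_nonneg ξ v x
  rw [norm_eq_abs, abs_mul, abs_of_nonneg hp0]
  have habs : |x - ξ| ≤ 1 + (x - ξ)^2 := by
    nlinarith [abs_nonneg (x - ξ), sq_abs (x - ξ), sq_nonneg (|x - ξ| - 1)]
  nlinarith [mul_le_mul_of_nonneg_right habs hp0]

lemma tendsto_lin_mul_pdf {l : Filter ℝ} (hv : v ≠ 0)
    (hl : Tendsto (fun x => |x - ξ|) l atTop) :
    Tendsto (fun x => (x - ξ) * gaussianPDFReal ξ v x) l (𝓝 0) := by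
  have hV : (0:ℝ) < (v:ℝ) := Vpos hv
  set c : ℝ := (√(2 * π * (v:ℝ)))⁻¹ with hc
  refine squeeze_zero_norm
    (a := fun x => c * rexp (-(x - ξ)^2 / (2*(v:ℝ)))
      + (c * (4*(v:ℝ))) * rexp (-(x - ξ)^2 / (4*(v:ℝ))))
    (fun x => by rw [Real.norm_eq_abs]; exact abs_mul_pdf_le ξ hv x) ?_
  have h1 := (tendsto_exp_gauss ξ (by positivity : (0:ℝ) < 2*(v:ℝ)) hl).const_mul c
  have h2 := (tendsto_exp_gauss ξ (by positivity : (0:ℝ) < 4*(v:ℝ)) hl).const_mul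
      (c * (4*(v:ℝ)))
  simpa using h1.add h2

lemma abs_tendsto_atTop : Tendsto (fun x : ℝ => |x - ξ|) atTop atTop :=
  (tendsto_abs_atTop_atTop).comp (tendsto_atTop_add_const_right _ (-ξ) tendsto_id)

lemma abs_tendsto_atBot : Tendsto (fun x : ℝ => |x - ξ|) atBot atTop :=
  (tendsto_abs_atBot_atTop).comp (tendsto_atBot_add_const_right _ (-ξ) tendsto_id)

lemma int_Ioi (hv : v ≠ 0) (a : ℝ) :
    ∫ x in Ioi a, (x - ξ) * gaussianPDFReal ξ v x = (v:ℝ) * gaussianPDFReal ξ v a := by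
  have h := integral_Ioi_of_hasDerivAt_of_tendsto' (a := a) (m := 0)
    (f := fun y => -(v:ℝ) * gaussianPDFReal ξ v y)
    (f' := fun x => (x - ξ) * gaussianPDFReal ξ v x)
    (fun x _ => hasDerivAt_gpdf ξ hv x)
    ((integrable_lin_mul_pdf ξ hv).integrableOn)
    (by simpa using (tendsto_gpdf ξ hv (abs_tendsto_atTop ξ)).const_mul (-(v:ℝ)))
  simpa using h

lemma int_Iic (hv : v ≠ 0) (a : ℝ) :
    ∫ x in Iic a, (x - ξ) * gaussianPDFReal ξ v x = -((v:ℝ) * gaussianPDFReal ξ v a) := by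
  have h := integral_Iic_of_hasDerivAt_of_tendsto' (a := a) (m := 0)
    (f := fun y => -(v:ℝ) * gaussianPDFReal ξ v y)
    (f' := fun x => (x - ξ) * gaussianPDFReal ξ v x)
    (fun x _ => hasDerivAt_gpdf ξ hv x)
    ((integrable_lin_mul_pdf ξ hv).integrableOn)
    (by simpa using (tendsto_gpdf ξ hv (abs_tendsto_atBot ξ)).const_mul (-(v:ℝ)))
  simpa using h

lemma second_moment (hv : v ≠ 0) :
    ∫ x, (x - ξ)^2 * gaussianPDFReal ξ v x = (v:ℝ) := by
  set p := gaussianPDFReal ξ v with hp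
  have hG : ∀ x, HasDerivAt (fun y => (y - ξ) * (-(v:ℝ) * p y))
      ((x - ξ)^2 * p x - (v:ℝ) * p x) x := by
    intro x
    have := ((hasDerivAt_id x).sub_const ξ).mul (hasDerivAt_gpdf ξ hv x)
    refine this.congr_deriv ?_
    simp only [id_eq]
    ring
  have hint : Integrable (fun x => (x - ξ)^2 * p x - (v:ℝ) * p x) :=
    (integrable_sq_mul_pdf ξ hv).sub ((integrable_gaussianPDFReal ξ v).const_mul _)
  have htop : Tendsto (fun y => (y - ξ) * (-(v:ℝ) * p y)) atTop (𝓝 0) := by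
    have h := (tendsto_lin_mul_pdf ξ hv (abs_tendsto_atTop ξ)).const_mul (-(v:ℝ))
    refine (by simpa using h : Tendsto (fun y => -(v:ℝ) * ((y - ξ) * p y)) atTop (𝓝 0)).congr
      fun y => by ring
  have hbot : Tendsto (fun y => (y - ξ) * (-(v:ℝ) * p y)) atBot (𝓝 0) := by
    have h := (tendsto_lin_mul_pdf ξ hv (abs_tendsto_atBot ξ)).const_mul (-(v:ℝ))
    refine (by simpa using h : Tendsto (fun y => -(v:ℝ) * ((y - ξ) * p y)) atBot (𝓝 0)).congr
      fun y => by ring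
  have h1 : ∫ x in Iic 0, ((x - ξ)^2 * p x - (v:ℝ) * p x)
      = (0 - ξ) * (-(v:ℝ) * p 0) - 0 :=
    integral_Iic_of_hasDerivAt_of_tendsto' (fun x _ => hG x) hint.integrableOn hbot
  have h2 : ∫ x in Ioi 0, ((x - ξ)^2 * p x - (v:ℝ) * p x)
      = 0 - (0 - ξ) * (-(v:ℝ) * p 0) :=
    integral_Ioi_of_hasDerivAt_of_tendsto' (fun x _ => hG x) hint.integrableOn htop
  have hsplit : (∫ x in Iic 0, ((x - ξ)^2 * p x - (v:ℝ) * p x))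
        + ∫ x in Ioi 0, ((x - ξ)^2 * p x - (v:ℝ) * p x)
      = ∫ x, ((x - ξ)^2 * p x - (v:ℝ) * p x) :=
    intervalIntegral.integral_Iic_add_Ioi hint.integrableOn hint.integrableOn
  have hzero : ∫ x, ((x - ξ)^2 * p x - (v:ℝ) * p x) = 0 := by
    rw [← hsplit, h1, h2]; ring
  have hsub := integral_sub (integrable_sq_mul_pdf ξ hv)
    ((integrable_gaussianPDFReal ξ v).const_mul ((v:ℝ)))
  rw [hzero] at hsub
  have hone : ∫ x, (v:ℝ) * p x = (v:ℝ) := by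
    rw [integral_const_mul, hp, integral_gaussianPDFReal_eq_one ξ hv, mul_one]
  rw [hone] at hsub
  linarith [hsub.symm]

lemma int_mid (hv : v ≠ 0) {t : ℝ} (ht : 0 ≤ t) :
    ∫ x in Ioc (-t) t, x * ((x - ξ) * gaussianPDFReal ξ v x)
      = -((v:ℝ) * t * (gaussianPDFReal ξ v t + gaussianPDFReal ξ v (-t)))
        + (v:ℝ) * ∫ x in Ioc (-t) t, gaussianPDFReal ξ v x := by
  set p := gaussianPDFReal ξ v with hp
  have hle : (-t) ≤ t := by linarith
  have hΦ : ∀ x, HasDerivAt (fun y => y * (-(v:ℝ) * p y))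
      (x * ((x - ξ) * p x) - (v:ℝ) * p x) x := by
    intro x
    have := (hasDerivAt_id x).mul (hasDerivAt_gpdf ξ hv x)
    refine this.congr_deriv ?_
    simp only [id_eq]
    ring
  have hcont1 : Continuous fun x => x * ((x - ξ) * p x) :=
    continuous_id.mul ((continuous_id.sub continuous_const).mul (continuous_gpdf ξ))
  have hkey : ∫ x in (-t)..t, (x * ((x - ξ) * p x) - (v:ℝ) * p x)
      = t * (-(v:ℝ) * p t) - (-t) * (-(v:ℝ) * p (-t)) :=
    intervalIntegral.integral_eq_sub_of_hasDerivAt (fun x _ => hΦ x)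
      ((hcont1.sub (continuous_const.mul (continuous_gpdf ξ))).intervalIntegrable _ _)
  rw [intervalIntegral.integral_sub (hcont1.intervalIntegrable _ _)
      (((continuous_gpdf ξ).const_mul (v:ℝ)).intervalIntegrable _ _),
    intervalIntegral.integral_const_mul,
    intervalIntegral.integral_of_le hle, intervalIntegral.integral_of_le hle] at hkey
  linear_combination hkey

lemma integrable_clamp_mul (hv : v ≠ 0) {t : ℝ} (ht : 0 ≤ t) :
    Integrable (fun x => clampF t x * ((x - ξ) * gaussianPDFReal ξ v x)) := by
  have hcont : Continuous fun x => clampF t x * ((x - ξ) * gaussianPDFReal ξ v x) := by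
    have h1 : Continuous (clampF t) :=
      continuous_const.max (continuous_id.min continuous_const)
    exact h1.mul ((continuous_id.sub continuous_const).mul (continuous_gpdf ξ))
  refine Integrable.mono' (g := fun x => t * |(x - ξ) * gaussianPDFReal ξ v x|)
    ((integrable_lin_mul_pdf ξ hv).abs.const_mul t) hcont.aestronglyMeasurable ?_
  filter_upwards with x
  rw [norm_eq_abs, abs_mul]
  exact mul_le_mul_of_nonneg_right (abs_clamp_le ht x) (abs_nonneg _)

lemma cross_integral (hv : v ≠ 0) {t : ℝ} (ht : 0 ≤ t) :
    ∫ x, clampF t x * ((x - ξ) * gaussianPDFReal ξ v x)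
      = (v:ℝ) * ∫ x in Icc (-t) t, gaussianPDFReal ξ v x := by
  set p := gaussianPDFReal ξ v with hp
  have hle : (-t) ≤ t := by linarith
  have hint := integrable_clamp_mul ξ hv ht
  have h0 : ∫ x, clampF t x * ((x - ξ) * p x)
      = (∫ x in Iic t, clampF t x * ((x - ξ) * p x))
        + ∫ x in Ioi t, clampF t x * ((x - ξ) * p x) :=
    (intervalIntegral.integral_Iic_add_Ioi hint.integrableOn hint.integrableOn).symm
  have h1 : ∫ x in Iic t, clampF t x * ((x - ξ) * p x)
      = (∫ x in Iic (-t), clampF t x * ((x - ξ) * p x))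
        + ∫ x in Ioc (-t) t, clampF t x * ((x - ξ) * p x) := by
    rw [← Iic_union_Ioc_eq_Iic hle]
    exact setIntegral_union (Iic_disjoint_Ioc le_rfl) measurableSet_Ioc
      hint.integrableOn hint.integrableOn
  have hlow : ∫ x in Iic (-t), clampF t x * ((x - ξ) * p x)
      = -t * ∫ x in Iic (-t), (x - ξ) * p x := by
    rw [← integral_const_mul]
    refine setIntegral_congr_fun measurableSet_Iic fun x hx => ?_
    have hx' : x ≤ -t := hx
    unfold clampF
    rw [min_eq_left (show x ≤ t by linarith), max_eq_left (show x ≤ -t from hx')]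
  have hhigh : ∫ x in Ioi t, clampF t x * ((x - ξ) * p x)
      = t * ∫ x in Ioi t, (x - ξ) * p x := by
    rw [← integral_const_mul]
    refine setIntegral_congr_fun measurableSet_Ioi fun x hx => ?_
    have hx' : t < x := hx
    unfold clampF
    rw [min_eq_right (show t ≤ x by linarith), max_eq_right (show -t ≤ t by linarith)]
  have hmidc : ∫ x in Ioc (-t) t, clampF t x * ((x - ξ) * p x)
      = ∫ x in Ioc (-t) t, x * ((x - ξ) * p x) := by
    refine setIntegral_congr_fun measurableSet_Ioc fun x hx => ?_
    obtain ⟨hx1, hx2⟩ := hx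
    unfold clampF
    rw [min_eq_left hx2, max_eq_right (show -t ≤ x by linarith)]
  have hIcc : ∫ x in Icc (-t) t, p x = ∫ x in Ioc (-t) t, p x :=
    integral_Icc_eq_integral_Ioc
  rw [h0, h1, hlow, hhigh, hmidc, int_mid ξ hv ht, int_Iic ξ hv, int_Ioi ξ hv, hIcc]
  ring

lemma integral_gaussian_eq (hv : v ≠ 0) (f : ℝ → ℝ) :
    ∫ x, f x ∂(gaussianReal ξ v) = ∫ x, gaussianPDFReal ξ v x * f x := by
  rw [gaussianReal_of_var_ne_zero ξ hv, gaussianPDF_def]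
  have hm : Measurable fun x => (gaussianPDFReal ξ v x).toNNReal :=
    (measurable_gaussianPDFReal ξ v).real_toNNReal
  rw [show (fun x => ENNReal.ofReal (gaussianPDFReal ξ v x))
      = fun x => ((gaussianPDFReal ξ v x).toNNReal : ℝ≥0∞) from rfl,
    integral_withDensity_eq_integral_smul hm f]
  congr 1
  funext x
  rw [NNReal.smul_def, Real.coe_toNNReal _ (gaussianPDFReal_nonneg ξ v x), smul_eq_mul]

lemma integrable_gaussian_iff (hv : v ≠ 0) (f : ℝ → ℝ) :
    Integrable f (gaussianReal ξ v)
      ↔ Integrable (fun x => gaussianPDFReal ξ v x * f x) := by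
  rw [gaussianReal_of_var_ne_zero ξ hv, gaussianPDF_def]
  rw [show (fun x => ENNReal.ofReal (gaussianPDFReal ξ v x))
      = fun x => ((gaussianPDFReal ξ v x).toNNReal : ℝ≥0∞) from rfl,
    integrable_withDensity_iff_integrable_smul
      ((measurable_gaussianPDFReal ξ v).real_toNNReal)]
  have heq : (fun x => (gaussianPDFReal ξ v x).toNNReal • f x)
      = fun x => gaussianPDFReal ξ v x * f x := by
    funext x
    rw [NNReal.smul_def, Real.coe_toNNReal _ (gaussianPDFReal_nonneg ξ v x), smul_eq_mul]
  rw [heq]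

end Gauss

end SureAux

open SureAux

/-- Stein's unbiased risk formula for soft thresholding:
if `z ∼ N(ξ, σ²)` and `t ≥ 0`, then
`E[(sgn(z)·max(|z|−t,0) − ξ)²] = σ²(1 − 2P(|z| ≤ t)) + E[min(z², t²)]`. -/
theorem sure_soft_threshold (ξ : ℝ) (v : ℝ≥0) (t : ℝ) (ht : 0 ≤ t) :
    ∫ z, (Real.sign z * max (|z| - t) 0 - ξ) ^ 2 ∂(gaussianReal ξ v) =
      (v : ℝ) * (1 - 2 * ((gaussianReal ξ v) {z : ℝ | |z| ≤ t}).toReal) +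
        ∫ z, min (z ^ 2) (t ^ 2) ∂(gaussianReal ξ v) := by
  rcases eq_or_ne v 0 with hv | hv
  · subst hv
    rw [gaussianReal_zero_var, integral_dirac, integral_dirac]
    simp only [NNReal.coe_zero, zero_mul, zero_add]
    calc (Real.sign ξ * max (|ξ| - t) 0 - ξ)^2
        = (ξ - clampF t ξ - ξ)^2 := by rw [soft_eq ht]
      _ = clampF t ξ ^ 2 := by ring
      _ = min (ξ^2) (t^2) := sq_clamp ht ξ
  · set p := gaussianPDFReal ξ v with hp
    have hptw : ∀ z : ℝ, (Real.sign z * max (|z| - t) 0 - ξ)^2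
        = (z - ξ)^2 - 2 * (clampF t z * (z - ξ)) + min (z^2) (t^2) := by
      intro z
      rw [soft_eq ht, ← sq_clamp ht z]
      ring
    have hA : Integrable (fun z => (z - ξ)^2) (gaussianReal ξ v) := by
      rw [integrable_gaussian_iff ξ hv]
      exact (integrable_sq_mul_pdf ξ hv).congr (ae_of_all _ fun x => mul_comm _ _)
    have hB : Integrable (fun z => clampF t z * (z - ξ)) (gaussianReal ξ v) := by
      rw [integrable_gaussian_iff ξ hv]
      exact (integrable_clamp_mul ξ hv ht).congr (ae_of_all _ fun x => by ring)
    have hC : Integrable (fun z => min (z^2) (t^2)) (gaussianReal ξ v) := by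
      refine Integrable.mono' (integrable_const (t^2))
        (((continuous_pow 2).min continuous_const).aestronglyMeasurable) ?_
      filter_upwards with z
      rw [norm_eq_abs, abs_of_nonneg (le_min (sq_nonneg z) (sq_nonneg t))]
      exact min_le_right _ _
    have hval2 : ∫ z, (z - ξ)^2 ∂(gaussianReal ξ v) = (v:ℝ) := by
      rw [integral_gaussian_eq ξ hv,
        show (fun x => p x * (x - ξ)^2) = fun x => (x - ξ)^2 * p x
          from funext fun x => mul_comm _ _]
      exact second_moment ξ hv
    have hvalB : ∫ z, clampF t z * (z - ξ) ∂(gaussianReal ξ v)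
        = (v:ℝ) * ∫ x in Icc (-t) t, p x := by
      rw [integral_gaussian_eq ξ hv,
        show (fun x => p x * (clampF t x * (x - ξ)))
          = fun x => clampF t x * ((x - ξ) * p x) from funext fun x => by ring]
      exact cross_integral ξ hv ht
    have hprob : ((gaussianReal ξ v) {z : ℝ | |z| ≤ t}).toReal
        = ∫ x in Icc (-t) t, p x := by
      have hset : {z : ℝ | |z| ≤ t} = Icc (-t) t := by ext z; simp [abs_le]
      rw [hset, gaussianReal_apply_eq_integral ξ hv,
        ENNReal.toReal_ofReal (setIntegral_nonneg measurableSet_Icc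
          fun x _ => gaussianPDFReal_nonneg ξ v x)]
    calc ∫ z, (Real.sign z * max (|z| - t) 0 - ξ)^2 ∂(gaussianReal ξ v)
        = ∫ z, ((z - ξ)^2 - 2 * (clampF t z * (z - ξ)) + min (z^2) (t^2))
            ∂(gaussianReal ξ v) := integral_congr_ae (ae_of_all _ hptw)
      _ = (∫ z, ((z - ξ)^2 - 2 * (clampF t z * (z - ξ))) ∂(gaussianReal ξ v))
            + ∫ z, min (z^2) (t^2) ∂(gaussianReal ξ v) :=
          integral_add (hA.sub (hB.const_mul 2)) hC
      _ = ((∫ z, (z - ξ)^2 ∂(gaussianReal ξ v))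
            - ∫ z, 2 * (clampF t z * (z - ξ)) ∂(gaussianReal ξ v))
            + ∫ z, min (z^2) (t^2) ∂(gaussianReal ξ v) := by
          rw [integral_sub hA (hB.const_mul 2)]
      _ = (v : ℝ) * (1 - 2 * ((gaussianReal ξ v) {z : ℝ | |z| ≤ t}).toReal) +
          ∫ z, min (z ^ 2) (t ^ 2) ∂(gaussianReal ξ v) := by
          rw [integral_const_mul, hval2, hvalB, hprob]
          ring
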